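/- There exists a constant C > 0 such that for every real ω ∈ (0, π/2] and every natural number j ≥ 1, | ∫_{−π}^{π} e^{ijφ} / (1 − e^{iω}·cos φ) dφ − √2·π·e^{iπ/4}·ω^{−1/2}·exp(−√2·e^{−iπ/4}·ω^{1/2}·j) | ≤ C·( j^{−1} + ω^{1/2} ). -/

import Mathlib

open Real Complex MeasureTheory

noncomputable def Complex.abs : AbsoluteValue ℂ ℝ := NormedField.toAbsoluteValue ℂ

lemma Complex.norm_eq_abs (z : ℂ) : ‖z‖ = Complex.abs z := rfl

@[simp] lemma Complex.abs_exp (z : ℂ) : Complex.abs (Complex.exp z) = Real.exp z.re :=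
  Complex.norm_exp z

@[simp] lemma Complex.abs_ofReal (r : ℝ) : Complex.abs (r : ℂ) = |r| := Complex.norm_real r

@[simp] lemma Complex.abs_I : Complex.abs Complex.I = 1 := Complex.norm_I

@[simp] lemma Complex.abs_two : Complex.abs 2 = 2 := Complex.norm_two

lemma Complex.sq_abs (z : ℂ) : Complex.abs z ^ 2 = Complex.normSq z := Complex.sq_norm z

lemma Complex.re_le_abs (z : ℂ) : z.re ≤ Complex.abs z := Complex.re_le_norm z

noncomputable def zz (ω : ℝ) : ℂ := Complex.exp (Complex.I * ω)
noncomputable def ss (ω : ℝ) : ℂ :=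
  (Real.sqrt (2 * Real.sin ω) : ℂ) * Complex.exp ((((ω - π/2)/2 : ℝ) : ℂ) * Complex.I)
noncomputable def rr (ω : ℝ) : ℂ := (1 - ss ω) * Complex.exp (-(Complex.I * ω))

lemma abs_zz (ω : ℝ) : Complex.abs (zz ω) = 1 := by
  simp [zz, Complex.abs_exp]

lemma abs_ss (ω : ℝ) (hω : 0 ≤ Real.sin ω) : Complex.abs (ss ω) = Real.sqrt (2 * Real.sin ω) := by
  simp [ss, Complex.abs_exp, Complex.abs_ofReal, _root_.abs_of_nonneg (Real.sqrt_nonneg _)]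

lemma re_ss (ω : ℝ) : (ss ω).re = Real.sqrt (2 * Real.sin ω) * Real.cos ((ω - π/2)/2) := by
  rw [ss, Complex.re_ofReal_mul, Complex.exp_ofReal_mul_I_re]

lemma sq_ss (ω : ℝ) (hω : 0 ≤ Real.sin ω) : (ss ω)^2 = 1 - (zz ω)^2 := by
  have h2 : (ss ω)^2
      = ((2 * Real.sin ω : ℝ) : ℂ) * Complex.exp ((((ω - π/2) : ℝ) : ℂ) * Complex.I) := by
    rw [ss, mul_pow, ← Complex.exp_nat_mul]
    rw [← Complex.ofReal_pow, Real.sq_sqrt (by positivity)]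
    congr 1
    push_cast
    ring
  have h3 : (zz ω)^2 = Complex.exp ((((2*ω : ℝ)) : ℂ) * Complex.I) := by
    rw [zz, ← Complex.exp_nat_mul]
    congr 1
    push_cast
    ring
  rw [h2, h3, Complex.exp_mul_I, Complex.exp_mul_I]
  have e1 : Complex.cos ((ω - π/2 : ℝ) : ℂ) = (Real.sin ω : ℂ) := by
    rw [← Complex.ofReal_cos]
    norm_cast
    rw [Real.cos_sub_pi_div_two]
  have e2 : Complex.sin ((ω - π/2 : ℝ) : ℂ) = -(Real.cos ω : ℂ) := by
    rw [← Complex.ofReal_sin]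
    norm_cast
    rw [Real.sin_sub_pi_div_two]
  have e3 : Complex.cos ((2*ω : ℝ) : ℂ) = ((1 - 2 * Real.sin ω ^2 : ℝ) : ℂ) := by
    rw [← Complex.ofReal_cos]
    norm_cast
    rw [Real.cos_two_mul']
    linear_combination Real.sin_sq_add_cos_sq ω
  have e4 : Complex.sin ((2*ω : ℝ) : ℂ) = ((2 * Real.sin ω * Real.cos ω : ℝ) : ℂ) := by
    rw [← Complex.ofReal_sin]
    norm_cast
    rw [Real.sin_two_mul]
  rw [e1, e2, e3, e4]
  push_cast
  ring

lemma zz_rr (ω : ℝ) : zz ω * rr ω = 1 - ss ω := by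
  rw [zz, rr, mul_comm, mul_assoc, ← Complex.exp_add]
  simp

lemma sin_pos_of_mem (ω : ℝ) (hω : ω ∈ Set.Ioc (0:ℝ) (π/2)) : 0 < Real.sin ω :=
  Real.sin_pos_of_pos_of_lt_pi hω.1 (lt_of_le_of_lt hω.2 (by linarith [Real.pi_pos]))

lemma two_sin_ge (ω : ℝ) (hω : ω ∈ Set.Ioc (0:ℝ) (π/2)) : ω ≤ 2 * Real.sin ω := by
  have h := Real.mul_le_sin (le_of_lt hω.1) hω.2
  have hπ : π ≤ 4 := by linarith [Real.pi_le_four]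
  have hπ0 := Real.pi_pos
  rw [div_mul_eq_mul_div, div_le_iff₀ hπ0] at h
  have hs := sin_pos_of_mem ω hω
  nlinarith [mul_nonneg hs.le (by linarith : (0:ℝ) ≤ 4 - π)]

lemma re_ss_gt_sin (ω : ℝ) (hω : ω ∈ Set.Ioc (0:ℝ) (π/2)) : Real.sin ω < (ss ω).re := by
  rw [re_ss]
  set t := Real.sqrt (2 * Real.sin ω) with ht
  set c := Real.cos ((ω - π/2)/2) with hc
  have hsin := sin_pos_of_mem ω hω
  have ht2 : t^2 = 2 * Real.sin ω := Real.sq_sqrt (by positivity)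
  have htpos : 0 < t := Real.sqrt_pos.2 (by positivity)
  have hcsq : c^2 = (1 + Real.sin ω)/2 := by
    rw [hc, Real.cos_sq]
    rw [show 2 * ((ω - π/2)/2) = ω - π/2 by ring, Real.cos_sub_pi_div_two]
    ring
  have hcpos : 0 < c := by
    have hnn : 0 ≤ c := by
      apply Real.cos_nonneg_of_mem_Icc
      constructor <;> [linarith [Real.pi_pos, hω.1]; linarith [Real.pi_pos, hω.2]]
    rcases hnn.lt_or_eq with h | h
    · exact h
    · exfalso; nlinarith
  have hct : t/2 < c := by
    nlinarith
  nlinarith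

lemma norm_rr_lt_one (ω : ℝ) (hω : ω ∈ Set.Ioc (0:ℝ) (π/2)) : Complex.abs (rr ω) < 1 := by
  have h1 : Complex.abs (rr ω) = Complex.abs (1 - ss ω) := by
    rw [rr, map_mul]
    simp [Complex.abs_exp]
  have hsin := sin_pos_of_mem ω hω
  have hre := re_ss_gt_sin ω hω
  have hnsq : Complex.normSq (ss ω) = 2 * Real.sin ω := by
    rw [← Complex.sq_abs, abs_ss ω (le_of_lt hsin), Real.sq_sqrt (by positivity)]
  have h2 : Complex.normSq (1 - ss ω) < 1 := by
    rw [Complex.normSq_apply] at hnsq ⊢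
    simp only [Complex.sub_re, Complex.sub_im, Complex.one_re, Complex.one_im]
    nlinarith
  rw [h1]
  have := Complex.sq_abs (1 - ss ω)
  nlinarith [Complex.abs.nonneg (1 - ss ω)]

lemma ss_ne_zero (ω : ℝ) (hω : ω ∈ Set.Ioc (0:ℝ) (π/2)) : ss ω ≠ 0 := by
  intro h
  have h1 := abs_ss ω (sin_pos_of_mem ω hω).le
  rw [h, map_zero] at h1
  have h2 := sin_pos_of_mem ω hω
  have h3 := Real.sqrt_pos.2 (by positivity : (0:ℝ) < 2 * Real.sin ω)
  linarith

lemma denom_ne_zero (ω : ℝ) (hω : ω ∈ Set.Ioc (0:ℝ) (π/2)) (φ : ℝ) :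
    1 - zz ω * (Real.cos φ : ℂ) ≠ 0 := by
  intro h
  have hre : (1 - zz ω * (Real.cos φ : ℂ)).re = 1 - Real.cos ω * Real.cos φ := by
    rw [zz, show Complex.I * (ω:ℂ) = (ω:ℂ) * Complex.I by ring, Complex.exp_mul_I]
    simp [Complex.sub_re, Complex.mul_re, ← Complex.ofReal_cos, ← Complex.ofReal_sin]
  have hcω : Real.cos ω < 1 := by
    rcases lt_or_eq_of_le (Real.cos_le_one ω) with h' | h'
    · exact h'
    · exfalso
      have := (Real.cos_eq_one_iff_of_lt_of_lt (x := ω)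
        (by linarith [Real.pi_pos, hω.1]) (by linarith [Real.pi_pos, hω.2])).1 h'
      exact absurd this (ne_of_gt hω.1)
  have hcω0 : 0 ≤ Real.cos ω := Real.cos_nonneg_of_mem_Icc
    ⟨by linarith [hω.1, Real.pi_pos], hω.2⟩
  have h1 : Real.cos ω * Real.cos φ < 1 := by
    nlinarith [Real.neg_one_le_cos φ, Real.cos_le_one φ]
  rw [h] at hre
  simp at hre
  linarith

lemma one_sub_rr_exp_ne (ω : ℝ) (hω : ω ∈ Set.Ioc (0:ℝ) (π/2)) (w : ℂ) (hw : Complex.abs w = 1) :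
    1 - rr ω * w ≠ 0 := by
  intro h
  have : Complex.abs (rr ω * w) = Complex.abs (rr ω) := by rw [map_mul, hw, mul_one]
  have h2 := norm_rr_lt_one ω hω
  have h3 : rr ω * w = 1 := by linear_combination -h
  rw [h3] at this
  simp at this
  linarith

lemma pointwise_decomp (ω : ℝ) (hω : ω ∈ Set.Ioc (0:ℝ) (π/2)) (φ : ℝ) :
    1 / (1 - zz ω * (Real.cos φ : ℂ))
      = (1/ss ω) * (1 / (1 - rr ω * Complex.exp (Complex.I * φ))
          + rr ω * Complex.exp (-(Complex.I * φ)) / (1 - rr ω * Complex.exp (-(Complex.I * φ)))) := by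
  have hzρ : zz ω * rr ω = 1 - ss ω := zz_rr ω
  have hs2 : (ss ω)^2 = 1 - (zz ω)^2 := sq_ss ω (sin_pos_of_mem ω hω).le
  have habs : Complex.abs (Complex.exp (Complex.I * (φ:ℂ))) = 1 := by
    simp [Complex.abs_exp]
  have habs' : Complex.abs (Complex.exp (-(Complex.I * (φ:ℂ)))) = 1 := by
    simp [Complex.abs_exp]
  have h1 := one_sub_rr_exp_ne ω hω _ habs
  have h2 := one_sub_rr_exp_ne ω hω _ habs'
  have h0 := denom_ne_zero ω hω φ
  have hs0 := ss_ne_zero ω hω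
  have hz0 : zz ω ≠ 0 := Complex.exp_ne_zero _
  have hcos : (Real.cos φ : ℂ) = (Complex.exp (Complex.I * φ) + Complex.exp (-(Complex.I * φ)))/2 := by
    rw [Complex.ofReal_cos, Complex.cos]
    ring_nf
  have hee : Complex.exp (Complex.I * φ) * Complex.exp (-(Complex.I * φ)) = 1 := by
    rw [← Complex.exp_add]; simp
  have hQ : 2 * rr ω = zz ω * ((rr ω)^2 + 1) := by
    apply mul_left_cancel₀ hz0
    linear_combination (1 + ss ω - zz ω * rr ω) * hzρ - hs2
  have h0' : (2:ℂ) - zz ω * (Complex.exp (Complex.I * φ) + Complex.exp (-(Complex.I * φ))) ≠ 0 := by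
    intro h
    apply h0
    rw [hcos]
    linear_combination h/2
  rw [hcos]
  have hL : (1:ℂ) - zz ω * ((Complex.exp (Complex.I * φ) + Complex.exp (-(Complex.I * φ)))/2) ≠ 0 := by
    rw [← hcos]; exact h0
  rw [div_add_div _ _ h1 h2, div_mul_div_comm,
    div_eq_div_iff hL (mul_ne_zero hs0 (mul_ne_zero h1 h2))]
  linear_combination
    (ss ω*(rr ω)^2 + (rr ω)^2*(1 - zz ω*(Complex.exp (Complex.I * φ) + Complex.exp (-(Complex.I * φ)))/2)) * hee
    + (1 - rr ω*(Complex.exp (Complex.I * φ) + Complex.exp (-(Complex.I * φ))) + (rr ω)^2) * hzρ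
    + (rr ω - (Complex.exp (Complex.I * φ) + Complex.exp (-(Complex.I * φ)))/2) * hQ

lemma integral_exp_int (n : ℤ) (hn : n ≠ 0) :
    (∫ φ in (-π:ℝ)..π, Complex.exp (Complex.I * n * φ)) = 0 := by
  have hc : (Complex.I * n : ℂ) ≠ 0 := by
    simp [Complex.I_ne_zero, hn]
  have key := integral_exp_mul_complex (a := -π) (b := π) hc
  simp only [mul_assoc] at key ⊢
  rw [key]
  have h2 : Complex.exp (Complex.I * ((n:ℂ) * (π:ℂ)))
      = Complex.exp (Complex.I * ((n:ℂ) * ((-π:ℝ):ℂ))) := by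
    have harg : (Complex.I*((n:ℂ)*(π:ℂ)))
        = Complex.I*((n:ℂ)*((-π:ℝ):ℂ)) + (n:ℂ)*(2*(π:ℂ)*Complex.I) := by push_cast; ring
    rw [harg, Complex.exp_add, Complex.exp_int_mul_two_pi_mul_I, mul_one]
  rw [h2, sub_self, zero_div]

lemma integral_exp_zero : (∫ φ in (-π:ℝ)..π, (1:ℂ)) = 2*π := by
  simp
  push_cast
  ring

lemma norm_aux (j k : ℕ) (ρ : ℂ) (ε : ℝ) (hε : ε = 1 ∨ ε = -1) (x : ℝ) :
    ‖Complex.exp (Complex.I * j * x) * (ρ * Complex.exp (Complex.I * (ε * x)))^k‖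
      = Complex.abs ρ ^ k := by
  rw [norm_mul, norm_pow, norm_mul]
  have h1 : ∀ t : ℝ, ‖Complex.exp (Complex.I * t)‖ = 1 := by
    intro t
    rw [Complex.norm_eq_abs, Complex.abs_exp]
    simp [Complex.mul_re]
  have h2 : ‖Complex.exp (Complex.I * (j:ℂ) * (x:ℝ))‖ = 1 := by
    have : Complex.I * (j:ℂ) * (x:ℝ) = Complex.I * ((j*x : ℝ) : ℂ) := by push_cast; ring
    rw [this, h1]
  rw [h2]
  have h3 : ‖Complex.exp (Complex.I * ((ε * x : ℝ):ℂ))‖ = 1 := h1 _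
  push_cast at h3
  rw [h3]
  simp [Complex.norm_eq_abs]

lemma geom_int_aux (ρ : ℂ) (hρ : Complex.abs ρ < 1) (j : ℕ) (ε : ℝ) (hε : ε = 1 ∨ ε = -1) :
    (∫ φ in (-π:ℝ)..π,
        Complex.exp (Complex.I * j * φ) / (1 - ρ * Complex.exp (Complex.I * (ε * φ))))
      = ∑' k : ℕ, (ρ^k * ∫ φ in (-π:ℝ)..π, Complex.exp (Complex.I * (j + ε*k) * φ)) := by
  have hpi : (-π:ℝ) ≤ π := by linarith [Real.pi_pos]
  set F : ℕ → ℝ → ℂ :=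
    fun k φ => Complex.exp (Complex.I * j * φ) * (ρ * Complex.exp (Complex.I * (ε * φ)))^k with hF
  have hlt : ∀ φ : ℝ, ‖ρ * Complex.exp (Complex.I * (ε * φ))‖ < 1 := by
    intro φ
    rw [norm_mul]
    have : ‖Complex.exp (Complex.I * ((ε * φ : ℝ):ℂ))‖ = 1 := by
      rw [Complex.norm_eq_abs, Complex.abs_exp]
      simp [Complex.mul_re]
    push_cast at this
    rw [this, mul_one, Complex.norm_eq_abs]
    exact hρ
  have hpt : ∀ φ : ℝ, Complex.exp (Complex.I * j * φ) / (1 - ρ * Complex.exp (Complex.I * (ε * φ)))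
      = ∑' k : ℕ, F k φ := by
    intro φ
    rw [div_eq_mul_inv, ← tsum_geometric_of_norm_lt_one (hlt φ), tsum_mul_left]
  have hcont : ∀ k, Continuous (F k) := by
    intro k
    apply Continuous.mul
    · fun_prop
    · apply Continuous.pow
      fun_prop
  have hint : ∀ k, IntegrableOn (F k) (Set.Ioc (-π) π) := by
    intro k
    exact ((hcont k).integrableOn_Ioc)
  have hnorm : ∀ k, (∫ x in Set.Ioc (-π:ℝ) π, ‖F k x‖) = Complex.abs ρ ^ k * (2*π) := by
    intro k
    have : ∀ x : ℝ, ‖F k x‖ = Complex.abs ρ ^ k := fun x => norm_aux j k ρ ε hε x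
    rw [MeasureTheory.setIntegral_congr_fun measurableSet_Ioc (fun x _ => this x)]
    rw [MeasureTheory.setIntegral_const, Real.volume_real_Ioc_of_le hpi, smul_eq_mul]
    ring
  have hsum : Summable fun k => ∫ x in Set.Ioc (-π:ℝ) π, ‖F k x‖ := by
    simp only [hnorm]
    exact (summable_geometric_of_lt_one (Complex.abs.nonneg ρ) hρ).mul_right _
  have hFval : ∀ k, ∀ x : ℝ, F k x = ρ^k * Complex.exp (Complex.I * (j + ε*k) * x) := by
    intro k x
    rw [hF]
    simp only [mul_pow, ← Complex.exp_nat_mul]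
    rw [mul_comm (Complex.exp _) _, mul_assoc, ← Complex.exp_add]
    congr 2
    push_cast
    ring
  calc (∫ φ in (-π:ℝ)..π,
        Complex.exp (Complex.I * j * φ) / (1 - ρ * Complex.exp (Complex.I * (ε * φ))))
      = ∫ φ in Set.Ioc (-π:ℝ) π,
          Complex.exp (Complex.I * j * φ) / (1 - ρ * Complex.exp (Complex.I * (ε * φ))) := by
        rw [intervalIntegral.integral_of_le hpi]
    _ = ∫ φ in Set.Ioc (-π:ℝ) π, ∑' k : ℕ, F k φ := by
        apply MeasureTheory.setIntegral_congr_fun measurableSet_Ioc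
        intro x _
        exact hpt x
    _ = ∑' k : ℕ, ∫ φ in Set.Ioc (-π:ℝ) π, F k φ :=
        (MeasureTheory.integral_tsum_of_summable_integral_norm hint hsum).symm
    _ = ∑' k : ℕ, (ρ^k * ∫ φ in (-π:ℝ)..π, Complex.exp (Complex.I * (j + ε*k) * φ)) := by
        congr 1
        funext k
        rw [← intervalIntegral.integral_of_le hpi, ← intervalIntegral.integral_const_mul]
        apply intervalIntegral.integral_congr
        intro x _
        exact hFval k x


lemma int_pos (ρ : ℂ) (hρ : Complex.abs ρ < 1) (j : ℕ) (hj : 1 ≤ j) :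
    (∫ φ in (-π:ℝ)..π,
        Complex.exp (Complex.I * j * φ) / (1 - ρ * Complex.exp (Complex.I * ((1:ℝ) * φ))))
      = 0 := by
  rw [geom_int_aux ρ hρ j 1 (Or.inl rfl)]
  have h : ∀ k : ℕ, (ρ^k * ∫ φ in (-π:ℝ)..π,
      Complex.exp (Complex.I * (j + (1:ℝ)*k) * φ)) = 0 := by
    intro k
    have harg : ∀ φ : ℝ, Complex.I * ((j:ℂ) + ((1:ℝ):ℂ)*(k:ℂ)) * (φ:ℂ)
        = Complex.I * (((j:ℤ) + (k:ℤ) : ℤ) : ℂ) * (φ:ℂ) := by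
      intro φ; push_cast; ring
    rw [intervalIntegral.integral_congr (fun φ _ => by rw [harg φ])]
    rw [integral_exp_int _ (by omega : ((j:ℤ) + (k:ℤ)) ≠ 0), mul_zero]
  simp only [h, tsum_zero]

lemma int_neg (ρ : ℂ) (hρ : Complex.abs ρ < 1) (j : ℕ) (hj : 1 ≤ j) :
    (∫ φ in (-π:ℝ)..π,
        Complex.exp (Complex.I * j * φ) / (1 - ρ * Complex.exp (Complex.I * ((-1:ℝ) * φ))))
      = 2*π*ρ^j := by
  rw [geom_int_aux ρ hρ j (-1) (Or.inr rfl)]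
  rw [tsum_eq_single j]
  · have harg : ∀ φ : ℝ, Complex.I * ((j:ℂ) + ((-1:ℝ):ℂ)*(j:ℂ)) * (φ:ℂ) = 0 := by
      intro φ; push_cast; ring
    rw [intervalIntegral.integral_congr (fun φ _ => by rw [harg φ, Complex.exp_zero])]
    rw [integral_exp_zero]
    ring
  · intro k hk
    have harg : ∀ φ : ℝ, Complex.I * ((j:ℂ) + ((-1:ℝ):ℂ)*(k:ℂ)) * (φ:ℂ)
        = Complex.I * (((j:ℤ) - (k:ℤ) : ℤ) : ℂ) * (φ:ℂ) := by
      intro φ; push_cast; ring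
    rw [intervalIntegral.integral_congr (fun φ _ => by rw [harg φ])]
    rw [integral_exp_int _ (by omega : ((j:ℤ) - (k:ℤ)) ≠ 0), mul_zero]

lemma closed_form (ω : ℝ) (hω : ω ∈ Set.Ioc (0:ℝ) (π/2)) (j : ℕ) (hj : 1 ≤ j) :
    (∫ φ in (-π:ℝ)..π,
        Complex.exp (Complex.I * j * φ) / (1 - Complex.exp (Complex.I * ω) * (Real.cos φ : ℂ)))
      = 2*π*(rr ω)^j / ss ω := by
  have hρ := norm_rr_lt_one ω hω
  have hs0 := ss_ne_zero ω hω
  have habs1 : ∀ t : ℂ, t.re = 0 → Complex.abs (Complex.exp t) = 1 := by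
    intro t ht
    rw [Complex.abs_exp, ht, Real.exp_zero]
  have hne1 : ∀ φ : ℝ, 1 - rr ω * Complex.exp (Complex.I * ((1:ℝ) * φ)) ≠ 0 := by
    intro φ
    apply one_sub_rr_exp_ne ω hω
    apply habs1
    simp [Complex.mul_re]
  have hne2 : ∀ φ : ℝ, 1 - rr ω * Complex.exp (Complex.I * ((-1:ℝ) * φ)) ≠ 0 := by
    intro φ
    apply one_sub_rr_exp_ne ω hω
    apply habs1
    simp [Complex.mul_re]
  have key : ∀ φ : ℝ,
      Complex.exp (Complex.I * j * φ) / (1 - Complex.exp (Complex.I * ω) * (Real.cos φ : ℂ))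
        = (1/ss ω) * (Complex.exp (Complex.I * j * φ) / (1 - rr ω * Complex.exp (Complex.I * ((1:ℝ) * φ))))
          + (1/ss ω) * (Complex.exp (Complex.I * j * φ) / (1 - rr ω * Complex.exp (Complex.I * ((-1:ℝ) * φ)))
              - Complex.exp (Complex.I * j * φ)) := by
    intro φ
    have hd := pointwise_decomp ω hω φ
    have e1 : Complex.exp (Complex.I * ((1:ℝ) * φ)) = Complex.exp (Complex.I * (φ:ℂ)) := by
      norm_num
    have e2 : Complex.exp (Complex.I * ((-1:ℝ) * φ)) = Complex.exp (-(Complex.I * (φ:ℂ))) := by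
      congr 1
      push_cast
      ring
    rw [e1, e2]
    have h1 := one_sub_rr_exp_ne ω hω (Complex.exp (Complex.I * (φ:ℂ)))
      (habs1 _ (by simp [Complex.mul_re]))
    have h2 := one_sub_rr_exp_ne ω hω (Complex.exp (-(Complex.I * (φ:ℂ))))
      (habs1 _ (by simp [Complex.mul_re]))
    have h0 : (1 : ℂ) - zz ω * (Real.cos φ : ℂ) ≠ 0 := denom_ne_zero ω hω φ
    have hzz : Complex.exp (Complex.I * (ω:ℂ)) = zz ω := rfl
    rw [hzz]
    rw [div_eq_mul_inv, ← one_div, hd]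
    field_simp
    ring
  rw [intervalIntegral.integral_congr (g := fun φ => _) (fun φ _ => key φ)]
  have cont_exp : Continuous fun φ : ℝ => Complex.exp (Complex.I * j * φ) := by fun_prop
  have cont1 : Continuous fun φ : ℝ => 1 - rr ω * Complex.exp (Complex.I * ((1:ℝ) * φ)) := by
    fun_prop
  have cont2 : Continuous fun φ : ℝ => 1 - rr ω * Complex.exp (Complex.I * ((-1:ℝ) * φ)) := by
    fun_prop
  have int1 : IntervalIntegrable
      (fun φ : ℝ => Complex.exp (Complex.I * j * φ) / (1 - rr ω * Complex.exp (Complex.I * ((1:ℝ) * φ))))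
      MeasureTheory.volume (-π) π :=
    (cont_exp.div cont1 hne1).intervalIntegrable _ _
  have int2 : IntervalIntegrable
      (fun φ : ℝ => Complex.exp (Complex.I * j * φ) / (1 - rr ω * Complex.exp (Complex.I * ((-1:ℝ) * φ))))
      MeasureTheory.volume (-π) π :=
    (cont_exp.div cont2 hne2).intervalIntegrable _ _
  have int3 : IntervalIntegrable (fun φ : ℝ => Complex.exp (Complex.I * j * φ))
      MeasureTheory.volume (-π) π := cont_exp.intervalIntegrable _ _
  rw [intervalIntegral.integral_add ((int1.const_mul _)) (((int2.sub int3).const_mul _))]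
  rw [intervalIntegral.integral_const_mul, intervalIntegral.integral_const_mul]
  rw [intervalIntegral.integral_sub int2 int3]
  rw [int_pos (rr ω) hρ j hj, int_neg (rr ω) hρ j hj]
  have hjz : ∀ φ : ℝ, Complex.I * (j:ℂ) * (φ:ℂ) = Complex.I * (((j:ℤ)):ℂ) * (φ:ℂ) := by
    intro φ; push_cast; ring
  rw [intervalIntegral.integral_congr (fun φ _ => by rw [hjz φ])]
  rw [integral_exp_int (j:ℤ) (by omega)]
  field_simp
  ring

noncomputable def sg (ω : ℝ) : ℂ :=
  (Real.sqrt 2 : ℂ) * Complex.exp (-(Complex.I * π / 4)) * (Real.sqrt ω : ℂ)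

lemma xexp_le (x : ℝ) (hx : 0 ≤ x) : x * Real.exp (-(x/2)) ≤ 1 := by
  have h1 : 1 + x/4 ≤ Real.exp (x/4) := by linarith [Real.add_one_le_exp (x/4)]
  have h2 : x ≤ Real.exp (x/2) := by
    have h3 : (1 + x/4)^2 ≤ Real.exp (x/4) ^ 2 := by nlinarith [Real.exp_pos (x/4)]
    have h4 : Real.exp (x/4) ^ 2 = Real.exp (x/2) := by
      rw [← Real.exp_nat_mul]
      congr 1
      push_cast
      ring
    nlinarith [sq_nonneg (1 - x/4)]
  have h4 : Real.exp (-(x/2)) = (Real.exp (x/2))⁻¹ := by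
    rw [← Real.exp_neg]
  rw [h4]
  rw [mul_inv_le_iff₀ (Real.exp_pos _), one_mul]
  exact h2

lemma sq_sg (ω : ℝ) (hω : 0 ≤ ω) : (sg ω)^2 = -(2*ω*Complex.I) := by
  rw [sg, mul_pow, mul_pow]
  have h1 : ((Real.sqrt 2 : ℝ):ℂ)^2 = 2 := by
    rw [← Complex.ofReal_pow, Real.sq_sqrt (by norm_num)]
    norm_num
  have h2 : ((Real.sqrt ω : ℝ):ℂ)^2 = (ω:ℂ) := by
    rw [← Complex.ofReal_pow, Real.sq_sqrt hω]
  have h3 : Complex.exp (-(Complex.I * π / 4))^2 = -Complex.I := by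
    rw [← Complex.exp_nat_mul]
    have harg : (2:ℕ) * (-(Complex.I * π / 4)) = ((-(π/2) : ℝ) : ℂ) * Complex.I := by
      push_cast; ring
    rw [harg, Complex.exp_mul_I]
    rw [← Complex.ofReal_cos, ← Complex.ofReal_sin]
    rw [Real.cos_neg, Real.sin_neg, Real.cos_pi_div_two, Real.sin_pi_div_two]
    simp
  rw [h1, h2, h3]
  ring

lemma re_sg (ω : ℝ) : (sg ω).re = Real.sqrt ω := by
  have h : Complex.exp (-(Complex.I * π / 4)) = Complex.exp (((-(π/4) : ℝ):ℂ) * Complex.I) := by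
    congr 1; push_cast; ring
  have h2 : sg ω = ((Real.sqrt 2 * Real.sqrt ω : ℝ) : ℂ)
      * Complex.exp (((-(π/4) : ℝ):ℂ) * Complex.I) := by
    rw [sg, h]
    push_cast
    ring
  rw [h2, Complex.re_ofReal_mul, Complex.exp_ofReal_mul_I_re, Real.cos_neg, Real.cos_pi_div_four]
  nlinarith [Real.sq_sqrt (by norm_num : (0:ℝ) ≤ 2), Real.sqrt_nonneg 2, Real.sqrt_nonneg ω]

lemma abs_sg (ω : ℝ) : Complex.abs (sg ω) = Real.sqrt 2 * Real.sqrt ω := by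
  rw [sg, map_mul, map_mul, Complex.abs_exp]
  have : (-(Complex.I * π / 4)).re = 0 := by simp
  rw [this, Real.exp_zero]
  simp [Complex.abs_ofReal, _root_.abs_of_nonneg (Real.sqrt_nonneg _)]

lemma abs_ss_ge (ω : ℝ) (hω : ω ∈ Set.Ioc (0:ℝ) (π/2)) :
    Real.sqrt ω ≤ Complex.abs (ss ω) := by
  rw [abs_ss ω (sin_pos_of_mem ω hω).le]
  exact Real.sqrt_le_sqrt (two_sin_ge ω hω)

lemma abs_ss_le (ω : ℝ) (hω : ω ∈ Set.Ioc (0:ℝ) (π/2)) :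
    Complex.abs (ss ω) ≤ Real.sqrt 2 * Real.sqrt ω := by
  rw [abs_ss ω (sin_pos_of_mem ω hω).le, ← Real.sqrt_mul (by norm_num : (0:ℝ) ≤ 2)]
  apply Real.sqrt_le_sqrt
  nlinarith [Real.sin_lt hω.1]

lemma re_ss_nonneg (ω : ℝ) (hω : ω ∈ Set.Ioc (0:ℝ) (π/2)) : 0 ≤ (ss ω).re := by
  rw [re_ss]
  apply mul_nonneg (Real.sqrt_nonneg _)
  apply Real.cos_nonneg_of_mem_Icc
  constructor
  · linarith [Real.pi_pos, hω.1]
  · linarith [Real.pi_pos, hω.2]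

lemma abs_ss_sub_sg (ω : ℝ) (hω : ω ∈ Set.Ioc (0:ℝ) (π/2)) (hsm : ω ≤ 1/64) :
    Complex.abs (ss ω - sg ω) ≤ 4 * ω * Real.sqrt ω := by
  have hω0 := hω.1
  have hsq : 0 < Real.sqrt ω := Real.sqrt_pos.2 hω0
  have hre : Real.sqrt ω ≤ (ss ω + sg ω).re := by
    rw [Complex.add_re, re_sg]
    linarith [re_ss_nonneg ω hω]
  have habs_sum : Real.sqrt ω ≤ Complex.abs (ss ω + sg ω) :=
    le_trans hre (Complex.re_le_abs _)
  have hne : ss ω + sg ω ≠ 0 := by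
    intro h
    rw [h, map_zero] at habs_sum
    linarith
  -- |ss^2 - sg^2| ≤ 3 ω^2
  have hsq_diff : Complex.abs ((ss ω)^2 - (sg ω)^2) ≤ 3 * ω^2 := by
    rw [sq_ss ω (sin_pos_of_mem ω hω).le, sq_sg ω hω0.le]
    have hzz2 : (zz ω)^2 = Complex.exp ((2*ω : ℝ) * Complex.I) := by
      rw [zz, ← Complex.exp_nat_mul]
      congr 1
      push_cast
      ring
    have h1 : (1 : ℂ) - (zz ω)^2 - -(2*ω*Complex.I)
        = -(Complex.exp ((2*ω : ℝ) * Complex.I) - ∑ m ∈ Finset.range 2, ((2*ω : ℝ) * Complex.I)^m / m.factorial) := by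
      rw [hzz2]
      simp [Finset.sum_range_succ]
      push_cast
      ring
    rw [h1, map_neg_eq_map]
    have hb := Complex.exp_bound (x := ((2*ω : ℝ) * Complex.I)) ?_ (by norm_num : 0 < 2)
    · have habs2 : Complex.abs ((2*ω : ℝ) * Complex.I) = 2*ω := by
        rw [map_mul, Complex.abs_I, Complex.abs_ofReal, mul_one,
          _root_.abs_of_nonneg (by linarith : (0:ℝ) ≤ 2*ω)]
      simp only [Complex.norm_eq_abs] at hb
      rw [habs2] at hb
      calc Complex.abs _ ≤ (2*ω)^2 * ((2+1 : ℕ) * ((2:ℕ).factorial * (2:ℕ) : ℝ)⁻¹) := hb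
        _ ≤ 3 * ω^2 := by norm_num [Nat.factorial]; nlinarith
    · rw [Complex.norm_eq_abs, map_mul, Complex.abs_I, Complex.abs_ofReal, mul_one,
        _root_.abs_of_nonneg (by linarith : (0:ℝ) ≤ 2*ω)]
      linarith
  have hfac : Complex.abs (ss ω - sg ω) * Complex.abs (ss ω + sg ω)
      = Complex.abs ((ss ω)^2 - (sg ω)^2) := by
    rw [← map_mul]
    congr 1
    ring
  have h3 : Complex.abs (ss ω - sg ω) * Real.sqrt ω ≤ 3 * ω^2 := by
    calc Complex.abs (ss ω - sg ω) * Real.sqrt ω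
        ≤ Complex.abs (ss ω - sg ω) * Complex.abs (ss ω + sg ω) := by
          apply mul_le_mul_of_nonneg_left habs_sum (Complex.abs.nonneg _)
      _ = Complex.abs ((ss ω)^2 - (sg ω)^2) := hfac
      _ ≤ 3 * ω^2 := hsq_diff
  have hω_eq : ω^2 = ω * Real.sqrt ω * Real.sqrt ω := by
    rw [mul_assoc, Real.mul_self_sqrt hω0.le]
    ring
  rw [hω_eq] at h3
  calc Complex.abs (ss ω - sg ω) ≤ 3 * ω * Real.sqrt ω := by
        have := mul_le_mul_of_nonneg_right h3 (le_of_lt (inv_pos.2 hsq))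
        rw [mul_assoc, mul_inv_cancel₀ (ne_of_gt hsq), mul_one] at this
        calc Complex.abs (ss ω - sg ω) = Complex.abs (ss ω - sg ω) * Real.sqrt ω * (Real.sqrt ω)⁻¹ := by
              field_simp
          _ ≤ 3 * (ω * Real.sqrt ω * Real.sqrt ω) * (Real.sqrt ω)⁻¹ := by
              apply mul_le_mul_of_nonneg_right h3 (le_of_lt (inv_pos.2 hsq))
          _ = 3 * ω * Real.sqrt ω := by field_simp
      _ ≤ 4 * ω * Real.sqrt ω := by nlinarith [Real.sqrt_nonneg ω]

lemma abs_sg_le_one (ω : ℝ) (hω : 0 ≤ ω) (hsm : ω ≤ 1/64) : Complex.abs (sg ω) ≤ 1 := by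
  rw [abs_sg]
  have h : (Real.sqrt 2 * Real.sqrt ω)^2 = 2*ω := by
    rw [mul_pow, Real.sq_sqrt (by norm_num : (0:ℝ) ≤ 2), Real.sq_sqrt hω]
  nlinarith [mul_nonneg (Real.sqrt_nonneg 2) (Real.sqrt_nonneg ω)]

lemma delta_bound (ω : ℝ) (hω : ω ∈ Set.Ioc (0:ℝ) (π/2)) (hsm : ω ≤ 1/64) :
    Complex.abs (rr ω * Complex.exp (sg ω) - 1) ≤ 20 * ω * Real.sqrt ω := by
  have hω0 := hω.1
  have hsq0 : 0 ≤ Real.sqrt ω := Real.sqrt_nonneg ω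
  have hsqle : Real.sqrt ω ≤ 1/8 := by
    rw [show (1/8 : ℝ) = Real.sqrt (1/64) by
      rw [show (1/64:ℝ) = (1/8)^2 by norm_num, Real.sqrt_sq (by norm_num)]]
    exact Real.sqrt_le_sqrt hsm
  have he : Complex.exp (-(Complex.I * ω)) * Complex.exp (Complex.I * ω) = 1 := by
    rw [← Complex.exp_add]; simp
  have hfac : rr ω * Complex.exp (sg ω) - 1
      = Complex.exp (-(Complex.I * ω))
        * (Complex.exp (sg ω) * (1 - ss ω) - Complex.exp (Complex.I * ω)) := by
    rw [rr]
    linear_combination he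
  rw [hfac, map_mul]
  have habs1 : Complex.abs (Complex.exp (-(Complex.I * ω))) = 1 := by
    rw [Complex.abs_exp]
    simp [Complex.mul_re]
  rw [habs1, one_mul]
  set R : ℂ := Complex.exp (sg ω) - (1 + sg ω + (sg ω)^2/2) with hR
  set Q : ℂ := Complex.exp (Complex.I * ω) - 1 - Complex.I * ω with hQ
  have hσ2 : (sg ω)^2 = -(2*ω*Complex.I) := sq_sg ω hω0.le
  have hdecomp : Complex.exp (sg ω) * (1 - ss ω) - Complex.exp (Complex.I * ω)
      = (sg ω - ss ω) * (1 + sg ω) + Complex.I * ω * ss ω + R * (1 - ss ω) - Q := by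
    rw [hR, hQ]
    linear_combination (-(1 + ss ω)/2) * hσ2
  rw [hdecomp]
  -- bounds for the four pieces
  have habs_sg : Complex.abs (sg ω) = Real.sqrt 2 * Real.sqrt ω := abs_sg ω
  have hsg2 : (Real.sqrt 2 * Real.sqrt ω)^2 = 2*ω := by
    rw [mul_pow, Real.sq_sqrt (by norm_num : (0:ℝ) ≤ 2), Real.sq_sqrt hω0.le]
  have hsg_le1 : Complex.abs (sg ω) ≤ 1 := abs_sg_le_one ω hω0.le hsm
  have hsg_le : Complex.abs (sg ω) ≤ (3/2) * Real.sqrt ω := by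
    rw [habs_sg]
    nlinarith [Real.sqrt_nonneg 2, Real.sqrt_nonneg ω,
      Real.sq_sqrt (by norm_num : (0:ℝ) ≤ 2), sq_nonneg (Real.sqrt 2 - 3/2)]
  have hss_le : Complex.abs (ss ω) ≤ (3/2) * Real.sqrt ω := by
    calc Complex.abs (ss ω) ≤ Real.sqrt 2 * Real.sqrt ω := abs_ss_le ω hω
      _ ≤ (3/2) * Real.sqrt ω := by
          nlinarith [Real.sqrt_nonneg 2, Real.sqrt_nonneg ω,
            Real.sq_sqrt (by norm_num : (0:ℝ) ≤ 2), sq_nonneg (Real.sqrt 2 - 3/2)]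
  have hss_le1 : Complex.abs (ss ω) ≤ 1 := by
    calc Complex.abs (ss ω) ≤ (3/2) * Real.sqrt ω := hss_le
      _ ≤ 1 := by nlinarith
  have hT1 : Complex.abs ((sg ω - ss ω) * (1 + sg ω)) ≤ 8 * ω * Real.sqrt ω := by
    rw [map_mul]
    have h1 : Complex.abs (sg ω - ss ω) ≤ 4 * ω * Real.sqrt ω := by
      rw [← map_neg_eq_map]
      have : -(sg ω - ss ω) = ss ω - sg ω := by ring
      rw [this]
      exact abs_ss_sub_sg ω hω hsm
    have h2 : Complex.abs (1 + sg ω) ≤ 2 := by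
      calc Complex.abs (1 + sg ω) ≤ Complex.abs 1 + Complex.abs (sg ω) := Complex.abs.add_le _ _
        _ ≤ 2 := by rw [map_one]; linarith
    calc Complex.abs (sg ω - ss ω) * Complex.abs (1 + sg ω)
        ≤ (4 * ω * Real.sqrt ω) * 2 := by
          apply mul_le_mul h1 h2 (Complex.abs.nonneg _) (by positivity)
      _ = 8 * ω * Real.sqrt ω := by ring
  have hT2 : Complex.abs (Complex.I * ω * ss ω) ≤ 2 * ω * Real.sqrt ω := by
    rw [map_mul, map_mul, Complex.abs_I, one_mul, Complex.abs_ofReal,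
      _root_.abs_of_nonneg hω0.le]
    calc ω * Complex.abs (ss ω) ≤ ω * ((3/2) * Real.sqrt ω) := by
          apply mul_le_mul_of_nonneg_left hss_le hω0.le
      _ ≤ 2 * ω * Real.sqrt ω := by nlinarith
  have hRb : Complex.abs R ≤ 3 * ω * Real.sqrt ω := by
    have hb := Complex.exp_bound (x := sg ω) hsg_le1 (by norm_num : 0 < 3)
    have hsum : ∑ m ∈ Finset.range 3, (sg ω)^m / m.factorial = 1 + sg ω + (sg ω)^2/2 := by
      simp [Finset.sum_range_succ, Nat.factorial]
    rw [hsum] at hb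
    have hcube : Complex.abs (sg ω)^3 * ((3+1 : ℕ) * (((3:ℕ).factorial * (3:ℕ) : ℝ))⁻¹)
        ≤ 3 * ω * Real.sqrt ω := by
      have h3 : Complex.abs (sg ω)^3 = 2*ω*(Real.sqrt 2 * Real.sqrt ω) := by
        rw [habs_sg, pow_succ, hsg2]
      rw [h3]
      norm_num [Nat.factorial]
      nlinarith [Real.sqrt_nonneg 2, Real.sqrt_nonneg ω, hω0.le,
        Real.sq_sqrt (by norm_num : (0:ℝ) ≤ 2), sq_nonneg (Real.sqrt 2 - 3/2),
        mul_nonneg hω0.le (Real.sqrt_nonneg ω)]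
    exact le_trans (by exact_mod_cast hb) hcube
  have hT3 : Complex.abs (R * (1 - ss ω)) ≤ 6 * ω * Real.sqrt ω := by
    rw [map_mul]
    have h2 : Complex.abs (1 - ss ω) ≤ 2 := by
      calc Complex.abs (1 - ss ω) = Complex.abs (1 + -(ss ω)) := by rw [sub_eq_add_neg]
        _ ≤ Complex.abs 1 + Complex.abs (-(ss ω)) := Complex.abs.add_le _ _
        _ ≤ 2 := by rw [map_one, map_neg_eq_map]; linarith
    calc Complex.abs R * Complex.abs (1 - ss ω) ≤ (3 * ω * Real.sqrt ω) * 2 := by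
          apply mul_le_mul hRb h2 (Complex.abs.nonneg _) (by positivity)
      _ = 6 * ω * Real.sqrt ω := by ring
  have hT4 : Complex.abs Q ≤ ω * Real.sqrt ω := by
    have habsiω : Complex.abs (Complex.I * ω) = ω := by
      rw [map_mul, Complex.abs_I, one_mul, Complex.abs_ofReal, _root_.abs_of_nonneg hω0.le]
    have hb := Complex.exp_bound (x := Complex.I * ω) (by rw [Complex.norm_eq_abs, habsiω]; linarith) (by norm_num : 0 < 2)
    have hsum : ∑ m ∈ Finset.range 2, (Complex.I * ω)^m / m.factorial = 1 + Complex.I * ω := by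
      simp [Finset.sum_range_succ, Nat.factorial]
    simp only [Complex.norm_eq_abs] at hb
    rw [hsum, habsiω] at hb
    have : Q = Complex.exp (Complex.I * ω) - (1 + Complex.I * ω) := by rw [hQ]; ring
    rw [this]
    calc Complex.abs _ ≤ ω^2 * ((2+1 : ℕ) * (((2:ℕ).factorial * (2:ℕ) : ℝ))⁻¹) := by
          exact_mod_cast hb
      _ ≤ ω * Real.sqrt ω := by
          norm_num [Nat.factorial]
          nlinarith [Real.sq_sqrt hω0.le, Real.sqrt_nonneg ω]
  have hωsq : 0 ≤ ω * Real.sqrt ω := mul_nonneg hω0.le hsq0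
  calc Complex.abs ((sg ω - ss ω) * (1 + sg ω) + Complex.I * ω * ss ω + R * (1 - ss ω) - Q)
      = Complex.abs ((sg ω - ss ω) * (1 + sg ω) + Complex.I * ω * ss ω + R * (1 - ss ω) + -Q) := by
        rw [sub_eq_add_neg]
    _ ≤ Complex.abs ((sg ω - ss ω) * (1 + sg ω) + Complex.I * ω * ss ω + R * (1 - ss ω))
        + Complex.abs Q := by
          have := Complex.abs.add_le ((sg ω - ss ω) * (1 + sg ω) + Complex.I * ω * ss ω + R * (1 - ss ω)) (-Q)
          rw [map_neg_eq_map] at this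
          exact this
    _ ≤ Complex.abs ((sg ω - ss ω) * (1 + sg ω) + Complex.I * ω * ss ω)
        + Complex.abs (R * (1 - ss ω)) + Complex.abs Q := by
          linarith [Complex.abs.add_le ((sg ω - ss ω) * (1 + sg ω) + Complex.I * ω * ss ω) (R * (1 - ss ω))]
    _ ≤ Complex.abs ((sg ω - ss ω) * (1 + sg ω)) + Complex.abs (Complex.I * ω * ss ω)
        + Complex.abs (R * (1 - ss ω)) + Complex.abs Q := by
          linarith [Complex.abs.add_le ((sg ω - ss ω) * (1 + sg ω)) (Complex.I * ω * ss ω)]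
    _ ≤ 20 * ω * Real.sqrt ω := by linarith

lemma pow_sub_one_abs (A : ℂ) (j : ℕ) :
    Complex.abs (A^j - 1) ≤ j * Complex.abs (A - 1) * (1 + Complex.abs (A - 1))^j := by
  set d := Complex.abs (A - 1) with hd
  have hA : Complex.abs A ≤ 1 + d := by
    calc Complex.abs A = Complex.abs (1 + (A - 1)) := by ring_nf
      _ ≤ Complex.abs 1 + Complex.abs (A - 1) := Complex.abs.add_le _ _
      _ = 1 + d := by rw [map_one]
  have hgeom : A^j - 1 = (∑ i ∈ Finset.range j, A^i) * (A - 1) := (geom_sum_mul A j).symm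
  rw [hgeom, map_mul]
  have hsum : Complex.abs (∑ i ∈ Finset.range j, A^i) ≤ j * (1 + d)^j := by
    calc Complex.abs (∑ i ∈ Finset.range j, A^i)
        ≤ ∑ i ∈ Finset.range j, Complex.abs (A^i) := Complex.abs.sum_le _ _
      _ ≤ ∑ _i ∈ Finset.range j, (1 + d)^j := by
          apply Finset.sum_le_sum
          intro i hi
          rw [map_pow]
          calc Complex.abs A ^ i ≤ (1+d)^i :=
                pow_le_pow_left₀ (Complex.abs.nonneg _) hA i
            _ ≤ (1+d)^j := by
                apply pow_le_pow_right₀ (by linarith [Complex.abs.nonneg (A-1)])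
                exact le_of_lt (Finset.mem_range.1 hi)
      _ = j * (1 + d)^j := by
          rw [Finset.sum_const, Finset.card_range, nsmul_eq_mul]
  calc Complex.abs (∑ i ∈ Finset.range j, A^i) * Complex.abs (A - 1)
      ≤ (j * (1 + d)^j) * d := by
        apply mul_le_mul_of_nonneg_right hsum (Complex.abs.nonneg _)
    _ = j * d * (1 + d)^j := by ring

lemma est_small (ω : ℝ) (hω : ω ∈ Set.Ioc (0:ℝ) (π/2)) (hsm : ω ≤ 1/64) (j : ℕ) (hj : 1 ≤ j) :
    Complex.abs (2*π*(rr ω)^j / ss ω - 2*π/sg ω * Complex.exp (-(sg ω * j)))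
      ≤ 48 * π * Real.sqrt ω := by
  have hω0 := hω.1
  have hπ := Real.pi_pos
  have hsq : 0 < Real.sqrt ω := Real.sqrt_pos.2 hω0
  have hs_ge : Real.sqrt ω ≤ Complex.abs (ss ω) := abs_ss_ge ω hω
  have hs_pos : 0 < Complex.abs (ss ω) := lt_of_lt_of_le hsq hs_ge
  have hs0 : ss ω ≠ 0 := by
    intro h; rw [h, map_zero] at hs_pos; exact lt_irrefl _ hs_pos
  have hsg_ge : Real.sqrt ω ≤ Complex.abs (sg ω) := by
    rw [abs_sg]
    nlinarith [Real.sqrt_nonneg ω, Real.sq_sqrt (by norm_num : (0:ℝ) ≤ 2), Real.sqrt_nonneg 2,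
      sq_nonneg (Real.sqrt 2 - 1)]
  have hsg_pos : 0 < Complex.abs (sg ω) := lt_of_lt_of_le hsq hsg_ge
  have hsg0 : sg ω ≠ 0 := by
    intro h; rw [h, map_zero] at hsg_pos; exact lt_irrefl _ hsg_pos
  -- decomposition
  have hdec : 2*π*(rr ω)^j / ss ω - 2*π/sg ω * Complex.exp (-(sg ω * j))
      = 2*π/ss ω * ((rr ω)^j - Complex.exp (-(sg ω * j)))
        + 2*π * Complex.exp (-(sg ω * j)) * (sg ω - ss ω) / (ss ω * sg ω) := by
    field_simp
    ring
  rw [hdec]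
  set d := Complex.abs (rr ω * Complex.exp (sg ω) - 1) with hd
  have hd_nn : 0 ≤ d := Complex.abs.nonneg _
  have hd_le : d ≤ 20 * ω * Real.sqrt ω := delta_bound ω hω hsm
  -- |exp(-(sg ω * j))| = exp (-(j * √ω))
  have habs_exp : Complex.abs (Complex.exp (-(sg ω * j))) = Real.exp (-((j:ℝ) * Real.sqrt ω)) := by
    rw [Complex.abs_exp]
    congr 1
    have : (-(sg ω * j)).re = -((sg ω).re * (j:ℝ)) := by
      simp [Complex.mul_re]
    rw [this, re_sg]
    ring
  -- |ρ^j - exp(-(sg ω * j))|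
  have hA : (rr ω)^j - Complex.exp (-(sg ω * j))
      = ((rr ω * Complex.exp (sg ω))^j - 1) * Complex.exp (-(sg ω * j)) := by
    have h1 : (rr ω * Complex.exp (sg ω))^j = (rr ω)^j * Complex.exp ((j:ℂ) * sg ω) := by
      rw [mul_pow, ← Complex.exp_nat_mul]
    have h2 : Complex.exp ((j:ℂ) * sg ω) * Complex.exp (-(sg ω * j)) = 1 := by
      rw [← Complex.exp_add, show (j:ℂ) * sg ω + -(sg ω * j) = 0 by push_cast; ring,
        Complex.exp_zero]
    rw [h1]
    linear_combination (-((rr ω)^j)) * h2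
  have hdiff : Complex.abs ((rr ω)^j - Complex.exp (-(sg ω * j)))
      ≤ (j * d * (1+d)^j) * Real.exp (-((j:ℝ) * Real.sqrt ω)) := by
    rw [hA, map_mul, habs_exp]
    apply mul_le_mul_of_nonneg_right _ (Real.exp_pos _).le
    exact pow_sub_one_abs _ j
  -- (1+d)^j ≤ exp (j d)
  have hpow_exp : (1+d)^j ≤ Real.exp ((j:ℝ) * d) := by
    calc (1+d)^j ≤ (Real.exp d)^j := by
          apply pow_le_pow_left₀ (by linarith) (by linarith [Real.add_one_le_exp d])
      _ = Real.exp ((j:ℝ) * d) := by rw [← Real.exp_nat_mul]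
  have hjd : (j:ℝ) * d - (j:ℝ) * Real.sqrt ω ≤ -((j:ℝ) * Real.sqrt ω / 2) := by
    have h20 : 20 * ω ≤ 1/2 := by linarith
    have : d ≤ Real.sqrt ω / 2 := by
      calc d ≤ 20 * ω * Real.sqrt ω := hd_le
        _ ≤ Real.sqrt ω / 2 := by nlinarith [Real.sqrt_nonneg ω]
    have hj0 : (0:ℝ) ≤ (j:ℝ) := Nat.cast_nonneg j
    nlinarith
  have hdiff2 : Complex.abs ((rr ω)^j - Complex.exp (-(sg ω * j)))
      ≤ (j:ℝ) * (20 * ω * Real.sqrt ω) * Real.exp (-((j:ℝ) * Real.sqrt ω / 2)) := by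
    calc Complex.abs ((rr ω)^j - Complex.exp (-(sg ω * j)))
        ≤ (j * d * (1+d)^j) * Real.exp (-((j:ℝ) * Real.sqrt ω)) := hdiff
      _ ≤ (j * d * Real.exp ((j:ℝ)*d)) * Real.exp (-((j:ℝ) * Real.sqrt ω)) := by
          apply mul_le_mul_of_nonneg_right _ (Real.exp_pos _).le
          apply mul_le_mul_of_nonneg_left hpow_exp (by positivity)
      _ = (j:ℝ) * d * Real.exp ((j:ℝ)*d - (j:ℝ)*Real.sqrt ω) := by
          rw [Real.exp_sub, Real.exp_neg]
          field_simp
      _ ≤ (j:ℝ) * (20 * ω * Real.sqrt ω) * Real.exp (-((j:ℝ) * Real.sqrt ω / 2)) := by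
          apply mul_le_mul
          · apply mul_le_mul_of_nonneg_left hd_le (Nat.cast_nonneg j)
          · exact Real.exp_le_exp.2 hjd
          · exact (Real.exp_pos _).le
          · positivity
  -- term A
  have hTA : Complex.abs (2*π/ss ω * ((rr ω)^j - Complex.exp (-(sg ω * j))))
      ≤ 40 * π * Real.sqrt ω := by
    rw [map_mul, map_div₀]
    have habs2π : Complex.abs (2*(π:ℂ)) = 2*π := by
      rw [map_mul]
      simp [Complex.abs_ofReal, _root_.abs_of_nonneg hπ.le]
    rw [habs2π]
    have hx := xexp_le ((j:ℝ) * Real.sqrt ω) (by positivity)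
    calc 2*π / Complex.abs (ss ω) * Complex.abs ((rr ω)^j - Complex.exp (-(sg ω * j)))
        ≤ 2*π / Real.sqrt ω * ((j:ℝ) * (20 * ω * Real.sqrt ω) * Real.exp (-((j:ℝ) * Real.sqrt ω / 2))) := by
          apply mul_le_mul
          · apply div_le_div_of_nonneg_left (by positivity) hsq hs_ge
          · exact hdiff2
          · exact Complex.abs.nonneg _
          · positivity
      _ = 40 * π * Real.sqrt ω * ((j:ℝ) * Real.sqrt ω * Real.exp (-((j:ℝ) * Real.sqrt ω / 2))) := by
          have e : Real.sqrt ω * Real.sqrt ω = ω := Real.mul_self_sqrt hω0.le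
          generalize Real.exp (-((j:ℝ) * Real.sqrt ω / 2)) = r'
          rw [div_mul_eq_mul_div, div_eq_iff hsq.ne']
          linear_combination (-(40*π*(j:ℝ)*r'*Real.sqrt ω)) * e
      _ ≤ 40 * π * Real.sqrt ω * 1 := by
          apply mul_le_mul_of_nonneg_left _ (by positivity)
          exact hx
      _ = 40 * π * Real.sqrt ω := by ring
  -- term B
  have hTB : Complex.abs (2*π * Complex.exp (-(sg ω * j)) * (sg ω - ss ω) / (ss ω * sg ω))
      ≤ 8 * π * Real.sqrt ω := by
    have h1 : Complex.abs (Complex.exp (-(sg ω * j))) ≤ 1 := by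
      rw [habs_exp]
      apply Real.exp_le_one_iff.2
      simp
      positivity
    have h2 : Complex.abs (sg ω - ss ω) ≤ 4 * ω * Real.sqrt ω := by
      rw [← map_neg_eq_map, show -(sg ω - ss ω) = ss ω - sg ω by ring]
      exact abs_ss_sub_sg ω hω hsm
    have habs2π : Complex.abs (2*(π:ℂ)) = 2*π := by
      rw [map_mul]
      simp [Complex.abs_ofReal, _root_.abs_of_nonneg hπ.le]
    have hnum : Complex.abs (2*(π:ℂ) * Complex.exp (-(sg ω * j)) * (sg ω - ss ω))
        ≤ 2*π*(4*ω*Real.sqrt ω) := by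
      rw [map_mul, map_mul, habs2π]
      calc 2*π * Complex.abs (Complex.exp (-(sg ω * j))) * Complex.abs (sg ω - ss ω)
          ≤ 2*π * 1 * (4*ω*Real.sqrt ω) := by
            apply mul_le_mul _ h2 (Complex.abs.nonneg _) (by positivity)
            apply mul_le_mul_of_nonneg_left h1 (by positivity)
        _ = 2*π*(4*ω*Real.sqrt ω) := by ring
    have hden : ω ≤ Complex.abs (ss ω * sg ω) := by
      rw [map_mul]
      calc ω = Real.sqrt ω * Real.sqrt ω := (Real.mul_self_sqrt hω0.le).symm
        _ ≤ Complex.abs (ss ω) * Complex.abs (sg ω) :=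
            mul_le_mul hs_ge hsg_ge hsq.le (Complex.abs.nonneg _)
    rw [map_div₀]
    calc Complex.abs (2*(π:ℂ) * Complex.exp (-(sg ω * j)) * (sg ω - ss ω))
          / Complex.abs (ss ω * sg ω)
        ≤ (2*π*(4*ω*Real.sqrt ω)) / ω := by
          apply div_le_div₀ (by positivity) hnum hω0 hden
      _ = 8 * π * Real.sqrt ω := by
          rw [div_eq_iff (ne_of_gt hω0)]
          ring
  calc Complex.abs (2*π/ss ω * ((rr ω)^j - Complex.exp (-(sg ω * j)))
        + 2*π * Complex.exp (-(sg ω * j)) * (sg ω - ss ω) / (ss ω * sg ω))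
      ≤ Complex.abs (2*π/ss ω * ((rr ω)^j - Complex.exp (-(sg ω * j))))
        + Complex.abs (2*π * Complex.exp (-(sg ω * j)) * (sg ω - ss ω) / (ss ω * sg ω)) :=
        Complex.abs.add_le _ _
    _ ≤ 48 * π * Real.sqrt ω := by linarith

lemma est_large (ω : ℝ) (hω : ω ∈ Set.Ioc (0:ℝ) (π/2)) (hlg : 1/64 < ω) (j : ℕ) (hj : 1 ≤ j) :
    Complex.abs (2*π*(rr ω)^j / ss ω - 2*π/sg ω * Complex.exp (-(sg ω * j)))
      ≤ 256 * π * Real.sqrt ω := by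
  have hω0 := hω.1
  have hπ := Real.pi_pos
  have hsq : 0 < Real.sqrt ω := Real.sqrt_pos.2 hω0
  have hsq8 : 1/8 ≤ Real.sqrt ω := by
    rw [show (1/8 : ℝ) = Real.sqrt (1/64) by
      rw [show (1/64:ℝ) = (1/8)^2 by norm_num, Real.sqrt_sq (by norm_num)]]
    exact Real.sqrt_le_sqrt hlg.le
  have hs_ge : Real.sqrt ω ≤ Complex.abs (ss ω) := abs_ss_ge ω hω
  have hsg_ge : Real.sqrt ω ≤ Complex.abs (sg ω) := by
    rw [abs_sg]
    nlinarith [Real.sqrt_nonneg ω, Real.sq_sqrt (by norm_num : (0:ℝ) ≤ 2), Real.sqrt_nonneg 2,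
      sq_nonneg (Real.sqrt 2 - 1)]
  have habs2π : Complex.abs (2*(π:ℂ)) = 2*π := by
    rw [map_mul]
    simp [Complex.abs_ofReal, _root_.abs_of_nonneg hπ.le]
  have hρ : Complex.abs ((rr ω)^j) ≤ 1 := by
    rw [map_pow]
    exact pow_le_one₀ (Complex.abs.nonneg _) (norm_rr_lt_one ω hω).le
  have hexp1 : Complex.abs (Complex.exp (-(sg ω * j))) ≤ 1 := by
    rw [Complex.abs_exp]
    apply Real.exp_le_one_iff.2
    have : (-(sg ω * j)).re = -((sg ω).re * (j:ℝ)) := by simp [Complex.mul_re]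
    rw [this, re_sg]
    simp
    positivity
  have hV : Complex.abs (2*π*(rr ω)^j / ss ω) ≤ 2*π/Real.sqrt ω := by
    rw [map_div₀, map_mul, habs2π]
    calc 2*π * Complex.abs ((rr ω)^j) / Complex.abs (ss ω)
        ≤ 2*π * 1 / Real.sqrt ω := by
          apply div_le_div₀ (by positivity) _ hsq hs_ge
          apply mul_le_mul_of_nonneg_left hρ (by positivity)
      _ = 2*π/Real.sqrt ω := by ring
  have hM : Complex.abs (2*π/sg ω * Complex.exp (-(sg ω * j))) ≤ 2*π/Real.sqrt ω := by
    rw [map_mul, map_div₀, habs2π]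
    calc 2*π / Complex.abs (sg ω) * Complex.abs (Complex.exp (-(sg ω * j)))
        ≤ 2*π / Real.sqrt ω * 1 := by
          apply mul_le_mul _ hexp1 (Complex.abs.nonneg _) (by positivity)
          apply div_le_div_of_nonneg_left (by positivity) hsq hsg_ge
      _ = 2*π/Real.sqrt ω := by ring
  have h4 : 2*π/Real.sqrt ω + 2*π/Real.sqrt ω ≤ 256 * π * Real.sqrt ω := by
    rw [← add_div, div_le_iff₀ hsq]
    have : (1:ℝ) ≤ 8 * Real.sqrt ω := by linarith
    nlinarith [Real.sq_sqrt hω0.le, Real.sqrt_nonneg ω]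
  calc Complex.abs (2*π*(rr ω)^j / ss ω - 2*π/sg ω * Complex.exp (-(sg ω * j)))
      ≤ Complex.abs (2*π*(rr ω)^j / ss ω) + Complex.abs (2*π/sg ω * Complex.exp (-(sg ω * j))) := by
        rw [sub_eq_add_neg]
        have := Complex.abs.add_le (2*π*(rr ω)^j / ss ω) (-(2*π/sg ω * Complex.exp (-(sg ω * j))))
        rw [map_neg_eq_map] at this
        exact this
    _ ≤ 256 * π * Real.sqrt ω := by linarith

theorem stmt_13 :
    ∃ C : ℝ, 0 < C ∧ ∀ ω : ℝ, ω ∈ Set.Ioc (0:ℝ) (π / 2) → ∀ j : ℕ, 1 ≤ j →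
      ‖(∫ φ in (-π:ℝ)..π,
            Complex.exp (Complex.I * j * φ) / (1 - Complex.exp (Complex.I * ω) * (Real.cos φ : ℂ)))
          - Real.sqrt 2 * π * Complex.exp (Complex.I * π / 4) * ((Real.sqrt ω)⁻¹ : ℝ) *
            Complex.exp (-(Real.sqrt 2 : ℂ) * Complex.exp (-(Complex.I * π / 4)) *
              (Real.sqrt ω : ℂ) * j)‖
        ≤ C * ((j : ℝ)⁻¹ + Real.sqrt ω) := by
  refine ⟨256 * π, by positivity, ?_⟩
  intro ω hω j hj
  have hω0 := hω.1
  have hπ := Real.pi_pos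
  have hsq : 0 < Real.sqrt ω := Real.sqrt_pos.2 hω0
  have hsqne : ((Real.sqrt ω : ℝ):ℂ) ≠ 0 := by
    simp [ne_of_gt hsq]
  have hsg0 : sg ω ≠ 0 := by
    intro h
    have := abs_sg ω
    rw [h, map_zero] at this
    nlinarith [Real.sqrt_nonneg 2, Real.sq_sqrt (by norm_num : (0:ℝ) ≤ 2)]
  -- rewrite main term
  have hexp_arg : -(Real.sqrt 2 : ℂ) * Complex.exp (-(Complex.I * π / 4)) * (Real.sqrt ω : ℂ) * j
      = -(sg ω * j) := by
    rw [sg]; ring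
  have hc4 : Complex.exp (-(Complex.I * π / 4)) * Complex.exp (Complex.I * π / 4) = 1 := by
    rw [← Complex.exp_add, show -(Complex.I * π / 4) + Complex.I * π / 4 = 0 by ring,
      Complex.exp_zero]
  have hsqrt2 : ((Real.sqrt 2 : ℝ):ℂ) * ((Real.sqrt 2 : ℝ):ℂ) = 2 := by
    rw [← Complex.ofReal_mul, Real.mul_self_sqrt (by norm_num)]
    norm_num
  have hcoef : (Real.sqrt 2 : ℂ) * π * Complex.exp (Complex.I * π / 4) * ((Real.sqrt ω)⁻¹ : ℝ)
      = 2*π/sg ω := by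
    have h := hc4
    rw [eq_div_iff hsg0, sg]
    revert h
    generalize Complex.exp (-(Complex.I * π / 4)) = c2
    generalize Complex.exp (Complex.I * π / 4) = c1
    intro h
    rw [Complex.ofReal_inv]
    have hw : ((Real.sqrt ω : ℝ):ℂ)⁻¹ * ((Real.sqrt ω : ℝ):ℂ) = 1 := inv_mul_cancel₀ hsqne
    linear_combination (((Real.sqrt 2 : ℝ):ℂ)^2*(π:ℂ)*c1*c2) * hw
      + ((π:ℂ)*c1*c2) * hsqrt2 + (2*(π:ℂ)) * h
  have hM : (Real.sqrt 2 : ℂ) * π * Complex.exp (Complex.I * π / 4) * ((Real.sqrt ω)⁻¹ : ℝ) *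
        Complex.exp (-(Real.sqrt 2 : ℂ) * Complex.exp (-(Complex.I * π / 4)) *
          (Real.sqrt ω : ℂ) * j)
      = 2*π/sg ω * Complex.exp (-(sg ω * j)) := by
    rw [hexp_arg, hcoef]
  rw [hM, closed_form ω hω j hj, Complex.norm_eq_abs]
  have hbound : Complex.abs (2*π*(rr ω)^j / ss ω - 2*π/sg ω * Complex.exp (-(sg ω * j)))
      ≤ 256 * π * Real.sqrt ω := by
    rcases le_or_gt ω (1/64) with hsm | hlg
    · calc _ ≤ 48 * π * Real.sqrt ω := est_small ω hω hsm j hj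
        _ ≤ 256 * π * Real.sqrt ω := by nlinarith
    · exact est_large ω hω hlg j hj
  calc Complex.abs (2*π*(rr ω)^j / ss ω - 2*π/sg ω * Complex.exp (-(sg ω * j)))
      ≤ 256 * π * Real.sqrt ω := hbound
    _ ≤ 256 * π * ((j : ℝ)⁻¹ + Real.sqrt ω) := by
        have hj0 : (0:ℝ) ≤ ((j:ℝ))⁻¹ := by positivity
        nlinarith
    _ = 256 * π * ((j : ℝ)⁻¹ + Real.sqrt ω) := rfl
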